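/- Let G be a context-free grammar over terminal alphabet A = {−1,0,1} with n nonterminals and degree m, let S be a nonterminal with finite displacement δ(S) attained by some word, and let c ∈ ℕ with c ≥ m^n. Then there is a word w ∈ L(S) with c →_w c + δ(S), i.e., counter value c can reach c + δ(S) along a terminal word derived from S without the counter ever going negative. -/

import Mathlib

/-- Parse trees over a CFG. -/
inductive PTree (V A : Type) where
  | leaf : (V ⊕ A) → PTree V A
  | node : V → List (PTree V A) → PTree V A

namespace PTree

variable {V A : Type}

/-- Label of the root, as a symbol. -/
def rootLabel : PTree V A → V ⊕ A
  | leaf s => s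
  | node X _ => Sum.inl X

/-- Nonterminals occurring in the tree. -/
def nts : PTree V A → List V
  | leaf (Sum.inl X) => [X]
  | leaf (Sum.inr _) => []
  | node X ts => X :: (ts.attach.map (fun t => nts t.1)).flatten
  decreasing_by
    have := List.sizeOf_lt_of_mem t.2
    simp_wf; omega

/-- Yield: the terminal leaf labels, read from left to right. -/
def yield : PTree V A → List A
  | leaf (Sum.inl _) => []
  | leaf (Sum.inr a) => [a]
  | node _ ts => (ts.attach.map (fun t => yield t.1)).flatten
  decreasing_by
    have := List.sizeOf_lt_of_mem t.2
    simp_wf; omega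

/-- Validity w.r.t. the rules `R`. -/
inductive valid (R : V → List (V ⊕ A) → Prop) : PTree V A → Prop
  | leaf (s : V ⊕ A) : valid R (.leaf s)
  | node (X : V) (ts : List (PTree V A)) :
      R X (ts.map rootLabel) → (∀ t ∈ ts, valid R t) → valid R (.node X ts)

/-- A parse tree is complete if all its leaves are labeled by terminals. -/
inductive complete : PTree V A → Prop
  | leaf (a : A) : complete (.leaf (Sum.inr a))
  | node (X : V) (ts : List (PTree V A)) :
      (∀ t ∈ ts, complete t) → complete (.node X ts)

/-- Elementary: no node has a proper descendant labeled by the same nonterminal. -/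
inductive elem : PTree V A → Prop
  | leaf (s : V ⊕ A) : elem (.leaf s)
  | node (X : V) (ts : List (PTree V A)) :
      (∀ t ∈ ts, X ∉ nts t) → (∀ t ∈ ts, elem t) → elem (.node X ts)

end PTree


/-- Counter semantics over the alphabet `{−1, 0, 1} ⊆ ℤ`. -/
def Reach : ℕ → List ℤ → ℕ → Prop
  | c, [], d => c = d
  | c, a :: w, d => ∃ c' : ℕ, (c : ℤ) + a = (c' : ℤ) ∧ Reach c' w d

section Aux

namespace PTree

variable {V A : Type}

@[simp] theorem yield_node (X : V) (ts : List (PTree V A)) :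
    yield (node X ts) = (ts.map yield).flatten := by
  rw [yield]; congr 1; exact List.attach_map_val (l := ts) (f := yield)

@[simp] theorem nts_node (X : V) (ts : List (PTree V A)) :
    nts (node X ts) = X :: (ts.map nts).flatten := by
  rw [nts]; congr 2; exact List.attach_map_val (l := ts) (f := nts)

/-- Custom induction principle. -/
theorem rec' {motive : PTree V A → Prop}
    (hleaf : ∀ s, motive (.leaf s))
    (hnode : ∀ X ts, (∀ t ∈ ts, motive t) → motive (.node X ts)) : ∀ t, motive t
  | .leaf s => hleaf s
  | .node X ts => hnode X ts (fun t ht => rec' hleaf hnode t)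
  decreasing_by
    have := List.sizeOf_lt_of_mem ht
    simp_wf; omega

/-- Subtree relation. -/
inductive IsSub : PTree V A → PTree V A → Prop
  | refl (t) : IsSub t t
  | child {s t : PTree V A} {X : V} {ts : List (PTree V A)} :
      t ∈ ts → IsSub s t → IsSub s (node X ts)

theorem IsSub.valid {R : V → List (V ⊕ A) → Prop} {s t : PTree V A}
    (h : IsSub s t) (hv : valid R t) : valid R s := by
  induction h with
  | refl => exact hv
  | child ht _ ih => cases hv with | node _ _ _ h2 => exact ih (h2 _ ht)

theorem IsSub.complete {s t : PTree V A} (h : IsSub s t) (hv : complete t) : complete s := by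
  induction h with
  | refl => exact hv
  | child ht _ ih => cases hv with | node _ _ h2 => exact ih (h2 _ ht)

theorem IsSub.elem {s t : PTree V A} (h : IsSub s t) (hv : elem t) : elem s := by
  induction h with
  | refl => exact hv
  | child ht _ ih => cases hv with | node _ _ _ h2 => exact ih (h2 _ ht)

theorem exists_sub_of_mem_nts {X : V} :
    ∀ t : PTree V A, X ∈ nts t → ∃ s, IsSub s t ∧ rootLabel s = Sum.inl X := by
  refine rec' ?_ ?_
  · rintro (Y | a) h
    · rw [nts] at h; simp at h; subst h
      exact ⟨_, IsSub.refl _, rfl⟩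
    · rw [nts] at h; simp at h
  · intro Y ts ih h
    rw [nts_node] at h
    rcases List.mem_cons.1 h with rfl | h
    · exact ⟨_, IsSub.refl _, rfl⟩
    · simp only [List.mem_flatten, List.mem_map] at h
      obtain ⟨l, ⟨t, ht, rfl⟩, hX⟩ := h
      obtain ⟨s, hs, hr⟩ := ih t ht hX
      exact ⟨s, IsSub.child ht hs, hr⟩

open Classical in
/-- Substitute `u` for every maximal subtree labeled `X`. -/
noncomputable def substX (X : V) (u : PTree V A) : PTree V A → PTree V A
  | .leaf s => if s = Sum.inl X then u else .leaf s
  | .node Y ts => if Y = X then u else .node Y (ts.attach.map (fun t => substX X u t.1))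
  decreasing_by
    have := List.sizeOf_lt_of_mem t.2
    simp_wf; omega

open Classical in
theorem substX_node {X Y : V} {u : PTree V A} (ts : List (PTree V A)) (h : Y ≠ X) :
    substX X u (node Y ts) = node Y (ts.map (substX X u)) := by
  rw [substX, if_neg h]; congr 1; exact List.attach_map_val (l := ts)

theorem rootLabel_substX {X : V} {u : PTree V A} (hu : rootLabel u = Sum.inl X) :
    ∀ t : PTree V A, rootLabel (substX X u t) = rootLabel t := by
  intro t
  cases t with
  | leaf s =>
    rw [substX]
    split
    · rw [hu]; rw [rootLabel]; exact (by assumption : s = Sum.inl X).symm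
    · rfl
  | node Y ts =>
    by_cases h : Y = X
    · subst h; rw [substX, if_pos rfl, hu]; rfl
    · rw [substX_node ts h]; rfl

theorem valid_substX {R : V → List (V ⊕ A) → Prop} {X : V} {u : PTree V A}
    (hu : rootLabel u = Sum.inl X) (hvu : valid R u) :
    ∀ t : PTree V A, valid R t → valid R (substX X u t) := by
  refine rec' ?_ ?_
  · intro s _
    rw [substX]; split
    · exact hvu
    · exact valid.leaf s
  · intro Y ts ih hv
    by_cases h : Y = X
    · subst h; rw [substX, if_pos rfl]; exact hvu
    · rw [substX_node ts h]
      cases hv with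
      | node _ _ h1 h2 =>
        refine valid.node Y _ ?_ ?_
        · have : (ts.map (substX X u)).map rootLabel = ts.map rootLabel := by
            rw [List.map_map]
            exact List.map_congr_left (fun t _ => rootLabel_substX hu t)
          rwa [this]
        · intro t ht
          obtain ⟨t', ht', rfl⟩ := List.mem_map.1 ht
          exact ih t' ht' (h2 t' ht')

theorem complete_substX {X : V} {u : PTree V A} (hcu : complete u) :
    ∀ t : PTree V A, complete t → complete (substX X u t) := by
  refine rec' ?_ ?_
  · intro s hc
    cases hc with
    | leaf a =>
      rw [substX]
      split
      · exact hcu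
      · exact complete.leaf a
  · intro Y ts ih hc
    by_cases h : Y = X
    · subst h; rw [substX, if_pos rfl]; exact hcu
    · rw [substX_node ts h]
      cases hc with
      | node _ _ h1 =>
        refine complete.node Y _ ?_
        intro t ht
        obtain ⟨t', ht', rfl⟩ := List.mem_map.1 ht
        exact ih t' ht' (h1 t' ht')

theorem sum_le_substX {X : V} {u : PTree V ℤ} :
    ∀ t : PTree V ℤ,
      (∀ s, IsSub s t → rootLabel s = Sum.inl X → (yield s).sum ≤ (yield u).sum) →
      (yield t).sum ≤ (yield (substX X u t)).sum := by
  refine rec' ?_ ?_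
  · intro s hs
    rw [substX]; split
    · rename_i h; subst h
      have := hs _ (IsSub.refl _) rfl
      simpa [yield] using this
    · exact le_refl _
  · intro Y ts ih hs
    by_cases h : Y = X
    · subst h
      rw [substX, if_pos rfl]
      exact hs _ (IsSub.refl _) rfl
    · rw [substX_node ts h]
      simp only [yield_node, List.sum_flatten, List.map_map, Function.comp_def]
      refine List.sum_le_sum ?_
      intro t ht
      exact ih t ht (fun s hsub hr => hs s (IsSub.child ht hsub) hr)

theorem sum_lt_substX {X : V} {u : PTree V ℤ} :
    ∀ t : PTree V ℤ, X ∈ nts t →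
      (∀ s, IsSub s t → rootLabel s = Sum.inl X → (yield s).sum < (yield u).sum) →
      (yield t).sum < (yield (substX X u t)).sum := by
  refine rec' ?_ ?_
  · rintro (Z | a) hX hs
    · rw [nts] at hX; simp at hX; subst hX
      rw [substX, if_pos rfl]
      have := hs _ (IsSub.refl _) rfl
      simpa [yield] using this
    · rw [nts] at hX; simp at hX
  · intro Y ts ih hX hs
    by_cases h : Y = X
    · subst h
      rw [substX, if_pos rfl]
      exact hs _ (IsSub.refl _) rfl
    · rw [substX_node ts h]
      rw [nts_node] at hX
      rcases List.mem_cons.1 hX with rfl | hX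
      · exact absurd rfl h
      simp only [List.mem_flatten, List.mem_map] at hX
      obtain ⟨l, ⟨t0, ht0, rfl⟩, hX0⟩ := hX
      simp only [yield_node, List.sum_flatten, List.map_map, Function.comp_def]
      refine List.sum_lt_sum _ _ ?_ ⟨t0, ht0, ?_⟩
      · intro t ht
        exact sum_le_substX t (fun s hsub hr => (hs s (IsSub.child ht hsub) hr).le)
      · exact ih t0 ht0 hX0 (fun s hsub hr => hs s (IsSub.child ht0 hsub) hr)

end PTree

end Aux
section Aux2

theorem list_choice {α β : Type} {P : α → β → Prop} :
    ∀ l : List α, (∀ a ∈ l, ∃ b, P a b) → ∃ l', List.Forall₂ P l l' := by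
  intro l
  induction l with
  | nil => exact fun _ => ⟨[], List.Forall₂.nil⟩
  | cons a l ih =>
    intro h
    obtain ⟨b, hb⟩ := h a List.mem_cons_self
    obtain ⟨l', hl'⟩ := ih (fun a ha => h a (List.mem_cons_of_mem _ ha))
    exact ⟨b :: l', List.Forall₂.cons hb hl'⟩

theorem forall₂_mem_right {α β : Type} {P : α → β → Prop} {l : List α} {l' : List β}
    (h : List.Forall₂ P l l') : ∀ b ∈ l', ∃ a ∈ l, P a b := by
  induction h with
  | nil => intro b hb; cases hb
  | cons h1 _ ih =>
    intro b hb
    rcases List.mem_cons.1 hb with rfl | hb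
    · exact ⟨_, List.mem_cons_self, h1⟩
    · obtain ⟨a, ha, hp⟩ := ih b hb
      exact ⟨a, List.mem_cons_of_mem _ ha, hp⟩

namespace PTree

variable {V : Type} {R : V → List (V ⊕ ℤ) → Prop}

theorem forall₂_root_eq {A : Type} {l l' : List (PTree V A)}
    (h : List.Forall₂ (fun a b => rootLabel b = rootLabel a) l l') :
    l'.map rootLabel = l.map rootLabel := by
  induction h with
  | nil => rfl
  | cons h1 _ ih => simp [h1, ih]

theorem forall₂_yield_sum_le {l l' : List (PTree V ℤ)}
    (h : List.Forall₂ (fun a b => (yield a).sum ≤ (yield b).sum) l l') :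
    ((l.map yield).flatten).sum ≤ ((l'.map yield).flatten).sum := by
  induction h with
  | nil => exact le_refl _
  | cons h1 _ ih => simpa using add_le_add h1 ih

theorem elementarize :
    ∀ t : PTree V ℤ, valid R t → complete t →
      (∃ t', valid R t' ∧ complete t' ∧ elem t' ∧ rootLabel t' = rootLabel t ∧
        (yield t).sum ≤ (yield t').sum) ∨
      (∃ t', valid R t' ∧ complete t' ∧ rootLabel t' = rootLabel t ∧
        (yield t).sum < (yield t').sum) := by
  refine rec' ?_ ?_
  · intro s hv hc
    exact Or.inl ⟨.leaf s, hv, hc, elem.leaf s, rfl, le_refl _⟩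
  · intro X ts ih hv hc
    have hvts : ∀ t ∈ ts, valid R t := by cases hv with | node _ _ _ h => exact h
    have hcts : ∀ t ∈ ts, complete t := by cases hc with | node _ _ h => exact h
    have hR : R X (ts.map rootLabel) := by cases hv with | node _ _ h _ => exact h
    by_cases hB : ∃ t ∈ ts, ∃ t', valid R t' ∧ complete t' ∧ rootLabel t' = rootLabel t ∧
        (yield t).sum < (yield t').sum
    · -- a child can be strictly improved: improve the whole tree
      obtain ⟨t1, ht1, t', hv', hc', hr', hlt⟩ := hB
      obtain ⟨l1, l2, rfl⟩ := List.append_of_mem ht1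
      refine Or.inr ⟨.node X (l1 ++ t' :: l2), ?_, ?_, rfl, ?_⟩
      · refine valid.node X _ ?_ ?_
        · have : (l1 ++ t' :: l2).map rootLabel = (l1 ++ t1 :: l2).map rootLabel := by
            simp [hr']
          rwa [this]
        · intro t ht
          rcases List.mem_append.1 ht with h | h
          · exact hvts t (List.mem_append_left _ h)
          · rcases List.mem_cons.1 h with rfl | h
            · exact hv'
            · exact hvts t (List.mem_append_right _ (List.mem_cons_of_mem _ h))
      · refine complete.node X _ ?_
        intro t ht
        rcases List.mem_append.1 ht with h | h
        · exact hcts t (List.mem_append_left _ h)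
        · rcases List.mem_cons.1 h with rfl | h
          · exact hc'
          · exact hcts t (List.mem_append_right _ (List.mem_cons_of_mem _ h))
      · simp only [yield_node, List.sum_flatten, List.map_map, List.map_append, List.map_cons,
          List.sum_append, List.sum_cons, Function.comp_def]
        omega
    · -- all children can be replaced by elementary trees
      push_neg at hB
      have hA : ∀ t ∈ ts, ∃ t', valid R t' ∧ complete t' ∧ elem t' ∧
          rootLabel t' = rootLabel t ∧ (yield t).sum ≤ (yield t').sum := by
        intro t ht
        rcases ih t ht (hvts t ht) (hcts t ht) with h | ⟨t', h1, h2, h3, h4⟩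
        · exact h
        · exact absurd h4 (not_lt.2 (hB t ht t' h1 h2 h3))
      obtain ⟨ts', hF⟩ := list_choice ts hA
      have hlen := hF.length_eq
      have hroot : ts'.map rootLabel = ts.map rootLabel :=
        forall₂_root_eq (hF.imp (fun {a b} h => h.2.2.2.1))
      have hmem : ∀ t' ∈ ts', valid R t' ∧ complete t' ∧ elem t' ∧
          ∃ t ∈ ts, rootLabel t' = rootLabel t ∧ (yield t).sum ≤ (yield t').sum := by
        intro t' ht'
        obtain ⟨t, ht, h1, h2, h3, h4, h5⟩ := forall₂_mem_right hF t' ht'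
        exact ⟨h1, h2, h3, t, ht, h4, h5⟩
      have hsum : (yield (node X ts)).sum ≤ (yield (node X ts')).sum := by
        simp only [yield_node, List.sum_flatten, List.map_map] at *
        have := forall₂_yield_sum_le (hF.imp (fun {a b} h => h.2.2.2.2))
        simpa [List.sum_flatten] using this
      have hv' : valid R (node X ts') := by
        refine valid.node X _ ?_ (fun t ht => (hmem t ht).1)
        rwa [hroot]
      have hc' : complete (node X ts') := complete.node X _ (fun t ht => (hmem t ht).2.1)
      by_cases hX : ∃ t' ∈ ts', X ∈ nts t'
      · -- pump: found X below the root
        obtain ⟨t1, ht1, hXt1⟩ := hX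
        by_cases hall : ∀ s, IsSub s t1 → rootLabel s = Sum.inl X →
            (yield s).sum < (yield (node X ts')).sum
        · -- all X-subtrees are strictly smaller: substitute the whole tree for one of them
          set u : PTree V ℤ := node X ts' with hu
          have hru : rootLabel u = Sum.inl X := rfl
          have hlt : (yield t1).sum < (yield (substX X u t1)).sum :=
            sum_lt_substX t1 hXt1 hall
          obtain ⟨l1, l2, rfl⟩ := List.append_of_mem ht1
          refine Or.inr ⟨.node X (l1 ++ substX X u t1 :: l2), ?_, ?_, rfl, ?_⟩
          · refine valid.node X _ ?_ ?_
            · have : (l1 ++ substX X u t1 :: l2).map rootLabel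
                  = (l1 ++ t1 :: l2).map rootLabel := by
                simp [rootLabel_substX hru]
              rw [this, hroot]; exact hR
            · intro t ht
              rcases List.mem_append.1 ht with h | h
              · exact (hmem t (List.mem_append_left _ h)).1
              · rcases List.mem_cons.1 h with rfl | h
                · exact valid_substX hru hv' t1 ((hmem t1 ht1).1)
                · exact (hmem t (List.mem_append_right _ (List.mem_cons_of_mem _ h))).1
          · refine complete.node X _ ?_
            intro t ht
            rcases List.mem_append.1 ht with h | h
            · exact (hmem t (List.mem_append_left _ h)).2.1
            · rcases List.mem_cons.1 h with rfl | h
              · exact complete_substX hc' t1 ((hmem t1 ht1).2.1)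
              · exact (hmem t (List.mem_append_right _ (List.mem_cons_of_mem _ h))).2.1
          · refine lt_of_le_of_lt hsum ?_
            have hus : (yield u).sum = (List.map (fun x => (yield x).sum) l1).sum
                + ((yield t1).sum + (List.map (fun x => (yield x).sum) l2).sum) := by
              rw [hu]
              simp [yield_node, List.sum_flatten, List.map_map, List.map_append,
                List.map_cons, List.sum_append, List.sum_cons, Function.comp_def]
            simp only [yield_node, List.sum_flatten, List.map_map, List.map_append,
              List.map_cons, List.sum_append, List.sum_cons, Function.comp_def]
            omega
        · -- some X-subtree is at least as large as the whole tree: take it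
          push_neg at hall
          obtain ⟨s, hsub, hrs, hge⟩ := hall
          refine Or.inl ⟨s, hsub.valid ((hmem t1 ht1).1), hsub.complete ((hmem t1 ht1).2.1),
            hsub.elem ((hmem t1 ht1).2.2.1), hrs, le_trans hsum hge⟩
      · -- no X below the root: the tree is elementary
        push_neg at hX
        refine Or.inl ⟨.node X ts', hv', hc', ?_, rfl, hsum⟩
        exact elem.node X _ hX (fun t ht => (hmem t ht).2.2.1)

end PTree

end Aux2
section Aux3

namespace PTree

variable {V : Type} {R : V → List (V ⊕ ℤ) → Prop}

open Classical in
theorem yield_length_le {m : ℕ} (hm : 1 ≤ m)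
    (hdeg : ∀ X rhs, R X rhs → rhs.length ≤ m) :
    ∀ t : PTree V ℤ, valid R t → elem t →
      (yield t).length ≤ m ^ (nts t).toFinset.card := by
  refine rec' ?_ ?_
  · rintro (X | a) _ _
    · rw [yield]; simp
    · rw [yield, nts]; simp
  · intro X ts ih hv he
    have hvts : ∀ t ∈ ts, valid R t := by cases hv with | node _ _ _ h => exact h
    have hR : R X (ts.map rootLabel) := by cases hv with | node _ _ h _ => exact h
    have hets : ∀ t ∈ ts, elem t := by cases he with | node _ _ _ h => exact h
    have hnX : ∀ t ∈ ts, X ∉ nts t := by cases he with | node _ _ h _ => exact h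
    have hXmem : X ∈ (nts (node X ts)).toFinset := by simp [nts_node]
    set K := (nts (node X ts)).toFinset.card with hK
    have hK1 : 1 ≤ K := Finset.card_pos.2 ⟨X, hXmem⟩
    have hchild : ∀ t ∈ ts, (yield t).length ≤ m ^ (K - 1) := by
      intro t ht
      refine (ih t ht (hvts t ht) (hets t ht)).trans ?_
      refine Nat.pow_le_pow_right hm ?_
      have hsub : (nts t).toFinset ⊆ (nts (node X ts)).toFinset.erase X := by
        intro y hy
        simp only [List.mem_toFinset] at hy
        refine Finset.mem_erase.2 ⟨?_, ?_⟩
        · rintro rfl; exact hnX t ht hy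
        · simp only [List.mem_toFinset, nts_node, List.mem_cons]
          exact Or.inr (List.mem_flatten.2 ⟨nts t, List.mem_map_of_mem ht, hy⟩)
      calc (nts t).toFinset.card ≤ ((nts (node X ts)).toFinset.erase X).card :=
            Finset.card_le_card hsub
        _ = K - 1 := by rw [Finset.card_erase_of_mem hXmem, hK]
    have hlen : ts.length ≤ m := by
      have := hdeg X (ts.map rootLabel) hR
      simpa using this
    calc (yield (node X ts)).length
        = (ts.map (fun t => (yield t).length)).sum := by
          simp [yield_node, List.length_flatten, List.map_map, Function.comp_def]
      _ ≤ (ts.map (fun t => (yield t).length)).length * (m ^ (K - 1)) := by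
          refine List.sum_le_card_nsmul _ _ ?_
          intro x hx
          obtain ⟨t, ht, rfl⟩ := List.mem_map.1 hx
          exact hchild t ht
      _ ≤ m * m ^ (K - 1) := by
          simp only [List.length_map]
          exact Nat.mul_le_mul_right _ hlen
      _ = m ^ K := by
          rw [← pow_succ']
          congr 1
          omega

theorem yield_letters (hA : ∀ X rhs, R X rhs → ∀ a : ℤ, Sum.inr a ∈ rhs →
      a = -1 ∨ a = 0 ∨ a = 1) :
    ∀ t : PTree V ℤ, valid R t → ∀ a ∈ yield t,
      a = -1 ∨ a = 0 ∨ a = 1 ∨ t = .leaf (Sum.inr a) := by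
  refine rec' ?_ ?_
  · rintro (X | b) _ a ha
    · rw [yield] at ha; cases ha
    · rw [yield] at ha
      rcases List.mem_singleton.1 ha with rfl
      exact Or.inr (Or.inr (Or.inr rfl))
  · intro X ts ih hv a ha
    have hvts : ∀ t ∈ ts, valid R t := by cases hv with | node _ _ _ h => exact h
    have hR : R X (ts.map rootLabel) := by cases hv with | node _ _ h _ => exact h
    rw [yield_node] at ha
    obtain ⟨l, hl, hal⟩ := List.mem_flatten.1 ha
    obtain ⟨t, ht, rfl⟩ := List.mem_map.1 hl
    rcases ih t ht (hvts t ht) a hal with h | h | h | h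
    · exact Or.inl h
    · exact Or.inr (Or.inl h)
    · exact Or.inr (Or.inr (Or.inl h))
    · subst h
      have : Sum.inr a ∈ ts.map rootLabel := by
        refine List.mem_map.2 ⟨_, ht, rfl⟩
      rcases hA X _ hR a this with h | h | h
      · exact Or.inl h
      · exact Or.inr (Or.inl h)
      · exact Or.inr (Or.inr (Or.inl h))

end PTree

theorem reach_of_len : ∀ (w : List ℤ) (c : ℕ),
    (∀ a ∈ w, a = -1 ∨ a = 0 ∨ a = 1) → w.length ≤ c →
    ∃ d : ℕ, (d : ℤ) = (c : ℤ) + w.sum ∧ Reach c w d := by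
  intro w
  induction w with
  | nil => intro c _ _; exact ⟨c, by simp, rfl⟩
  | cons a w ih =>
    intro c hall hlen
    have ha := hall a List.mem_cons_self
    have hc1 : 1 ≤ c := by simp at hlen; omega
    have hnn : 0 ≤ (c : ℤ) + a := by rcases ha with rfl | rfl | rfl <;> omega
    obtain ⟨c', hc'⟩ : ∃ c' : ℕ, (c : ℤ) + a = (c' : ℤ) := ⟨((c : ℤ) + a).toNat, by omega⟩
    have hlen' : w.length ≤ c' := by
      simp only [List.length_cons] at hlen
      rcases ha with rfl | rfl | rfl <;> omega
    obtain ⟨d, hd, hr⟩ := ih c' (fun b hb => hall b (List.mem_cons_of_mem _ hb)) hlen'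
    exact ⟨d, by simp [List.sum_cons]; omega, ⟨c', hc', hr⟩⟩

end Aux3

/-- For a grammar over `{−1, 0, 1}` with `n` nonterminals and degree `m ≥ 1`, if the
displacement of `S` is attained by (the yield of) a complete parse tree `t₀` rooted
at `S`, then for every `c ≥ m ^ n` there is a word `w ∈ L(S)` with `c →_w c + δ(S)`. -/
theorem summary_attains_displacement {V : Type} [Fintype V]
    (R : V → List (V ⊕ ℤ) → Prop)
    (hA : ∀ X rhs, R X rhs → ∀ a : ℤ, Sum.inr a ∈ rhs → a = -1 ∨ a = 0 ∨ a = 1)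
    (m : ℕ) (hm : 1 ≤ m) (hdeg : ∀ X rhs, R X rhs → rhs.length ≤ m)
    (S : V) (t₀ : PTree V ℤ)
    (hv₀ : PTree.valid R t₀) (hc₀ : PTree.complete t₀)
    (hr₀ : PTree.rootLabel t₀ = Sum.inl S)
    (hmax : ∀ t : PTree V ℤ, PTree.valid R t → PTree.complete t →
      PTree.rootLabel t = Sum.inl S → (PTree.yield t).sum ≤ (PTree.yield t₀).sum)
    (c : ℕ) (hc : m ^ Fintype.card V ≤ c) :
    ∃ w : List ℤ,
      (∃ t : PTree V ℤ, PTree.valid R t ∧ PTree.complete t ∧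
        PTree.rootLabel t = Sum.inl S ∧ PTree.yield t = w) ∧
      ∃ d : ℕ, (d : ℤ) = (c : ℤ) + (PTree.yield t₀).sum ∧ Reach c w d := by
    classical
  rcases PTree.elementarize t₀ hv₀ hc₀ with ⟨t, hv, hcm, he, hr, hle⟩ | ⟨t, hv, hcm, hr, hlt⟩
  · have hr' : PTree.rootLabel t = Sum.inl S := by rw [hr, hr₀]
    have heq : (PTree.yield t).sum = (PTree.yield t₀).sum :=
      le_antisymm (hmax t hv hcm hr') hle
    have hlen : (PTree.yield t).length ≤ c := by
      calc (PTree.yield t).length ≤ m ^ (PTree.nts t).toFinset.card :=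
            PTree.yield_length_le hm hdeg t hv he
        _ ≤ m ^ Fintype.card V :=
            Nat.pow_le_pow_right hm ((Finset.card_le_univ _).trans_eq Finset.card_univ)
        _ ≤ c := hc
    have hlet : ∀ a ∈ PTree.yield t, a = -1 ∨ a = 0 ∨ a = 1 := by
      intro a ha
      rcases PTree.yield_letters hA t hv a ha with h | h | h | h
      · exact Or.inl h
      · exact Or.inr (Or.inl h)
      · exact Or.inr (Or.inr h)
      · rw [h] at hr'; simp [PTree.rootLabel] at hr'
    obtain ⟨d, hd, hre⟩ := reach_of_len _ c hlet hlen
    exact ⟨_, ⟨t, hv, hcm, hr', rfl⟩, d, by rw [hd, heq], hre⟩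
  · exact absurd hlt (not_lt.2 (hmax t hv hcm (by rw [hr, hr₀])))
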